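/- Let η > 0, n ≥ 1, and k ≥ 2, let π ∈ ℝ^k be mixing weights (π_j ≥ 0, Σ_j π_j = 1), let m ∈ [0,1]^{n×k}, and let M be the moment matrix of m. Suppose M is ill-conditioned in the sense that there exists a nonzero v ∈ ℝ^k with max_{S⊆[n]} |M_S · v| ≤ (η·√2 / (3k²)) · max_{j} |v_j| (i.e., σ^∞_min(M) ≤ η√2/(3k²)). Then there exist mixing weights π′ ∈ ℝ^k (π′_j ≥ 0, Σ_j π′_j = 1) with at most k − 1 nonzero entries such that |M_S · π − M_S · π′| ≤ η for every S ⊆ [n] with |S| ≤ k; that is, the mixture (π, m) is η-close on all moments of degree at most k to a mixture of at most k − 1 of the same product distributions. -/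

import Mathlib

/-- collapsing ill-conditioned moment matrices. If the moment matrix `M` of
`m` satisfies `σ^∞_min(M) ≤ η·√2/(3k²)`, witnessed by a nonzero `v` with
`|M_S · v| ≤ (η·√2/(3k²))·max_j |v_j|` for all `S`, then there are mixing weights `π'` with
at most `k − 1` nonzero entries whose mixture with the same marginals `m` is `η`-close to
the mixture `(π, m)` on all moments of degree at most `k`. -/
lemma stmt_19_aux (η kk s2 : ℝ) (hη : 0 ≤ η) (hk : 2 ≤ kk) (hs : s2 ≤ 2) (hs0 : 0 ≤ s2) :
    2 * (η * s2) ≤ η * (3 * kk ^ 2) := by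
  have hk4 : (4:ℝ) ≤ kk ^ 2 := by nlinarith
  nlinarith [mul_nonneg hη (sub_nonneg.mpr hs), mul_nonneg hη (sub_nonneg.mpr hk4),
    mul_nonneg hη (by nlinarith : (0:ℝ) ≤ kk ^ 2)]

theorem stmt_19 (n k : ℕ) (hn : 1 ≤ n) (hk : 2 ≤ k)
    (η : ℝ) (hη : 0 < η)
    (π : Fin k → ℝ) (hπ0 : ∀ j, 0 ≤ π j) (hπ1 : ∑ j, π j = 1)
    (m : Fin n → Fin k → ℝ) (hm : ∀ i j, m i j ∈ Set.Icc (0:ℝ) 1)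
    (v : Fin k → ℝ) (hv : v ≠ 0)
    (hill : ∀ S : Finset (Fin n),
      |∑ j, (∏ i ∈ S, m i j) * v j| ≤ η * Real.sqrt 2 / (3 * (k : ℝ) ^ 2) * ⨆ j, |v j|) :
    ∃ π' : Fin k → ℝ, (∀ j, 0 ≤ π' j) ∧ (∑ j, π' j = 1) ∧
      (Finset.univ.filter (fun j => π' j ≠ 0)).card ≤ k - 1 ∧
      ∀ S : Finset (Fin n), S.card ≤ k →
        |∑ j, (∏ i ∈ S, m i j) * π j - ∑ j, (∏ i ∈ S, m i j) * π' j| ≤ η := by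
  classical
  have hkR : (2:ℝ) ≤ (k:ℝ) := by exact_mod_cast hk
  have hk0 : (0:ℝ) < (k:ℝ) := by linarith
  have hs2nn : (0:ℝ) ≤ Real.sqrt 2 := Real.sqrt_nonneg 2
  have hs2 : Real.sqrt 2 ≤ 2 := by
    nlinarith [Real.sq_sqrt (by norm_num : (0:ℝ) ≤ 2)]
  set ε : ℝ := η * Real.sqrt 2 / (3 * (k : ℝ) ^ 2) with hεdef
  have hε0 : 0 ≤ ε := by positivity
  have hprod0 : ∀ (S : Finset (Fin n)) (j : Fin k), 0 ≤ ∏ i ∈ S, m i j := by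
    intro S j; exact Finset.prod_nonneg fun i _ => (hm i j).1
  have hprod1 : ∀ (S : Finset (Fin n)) (j : Fin k), ∏ i ∈ S, m i j ≤ 1 := by
    intro S j; exact Finset.prod_le_one (fun i _ => (hm i j).1) (fun i _ => (hm i j).2)
  have hπle1 : ∀ j, π j ≤ 1 := by
    intro j
    calc π j = ∑ j' ∈ {j}, π j' := by simp
    _ ≤ ∑ j', π j' := Finset.sum_le_sum_of_subset_of_nonneg (Finset.subset_univ _)
        (fun i _ _ => hπ0 i)
    _ = 1 := hπ1
  -- general: mixtures have moments in [0,1]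
  have hmix : ∀ (S : Finset (Fin n)) (p : Fin k → ℝ), (∀ j, 0 ≤ p j) → (∑ j, p j = 1) →
      ∑ j, (∏ i ∈ S, m i j) * p j ∈ Set.Icc (0:ℝ) 1 := by
    intro S p hp0 hp1
    constructor
    · exact Finset.sum_nonneg fun j _ => mul_nonneg (hprod0 S j) (hp0 j)
    · calc ∑ j, (∏ i ∈ S, m i j) * p j ≤ ∑ j, p j := by
            refine Finset.sum_le_sum fun j _ => ?_
            nlinarith [hprod0 S j, hprod1 S j, hp0 j]
      _ = 1 := hp1
  rcases le_or_gt η 1 with hη1 | hη1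
  swap
  · -- trivial case: η > 1, collapse to a single component
    have hk0' : 0 < k := by omega
    refine ⟨fun j => if j = ⟨0, hk0'⟩ then 1 else 0, ?_, ?_, ?_, ?_⟩
    · intro j; dsimp only; split <;> norm_num
    · simp
    · have hsub : (Finset.univ.filter
          (fun j => (if j = (⟨0, hk0'⟩ : Fin k) then (1:ℝ) else 0) ≠ 0)) ⊆ {⟨0, hk0'⟩} := by
        intro j hj
        simp only [Finset.mem_filter] at hj
        by_contra hne
        simp only [Finset.mem_singleton] at hne
        exact hj.2 (by simp [hne])
      calc _ ≤ ({(⟨0, hk0'⟩ : Fin k)} : Finset (Fin k)).card := Finset.card_le_card hsub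
        _ = 1 := rfl
        _ ≤ k - 1 := by omega
    · intro S hS
      have hB : ∑ j, (∏ i ∈ S, m i j) * (if j = (⟨0, hk0'⟩ : Fin k) then (1:ℝ) else 0)
          = ∏ i ∈ S, m i ⟨0, hk0'⟩ := by
        rw [Finset.sum_eq_single (⟨0, hk0'⟩ : Fin k)]
        · simp
        · intro b _ hb; simp [hb]
        · simp
      rw [hB]
      have hA := hmix S π hπ0 hπ1
      have h1 := hprod0 S ⟨0, hk0'⟩
      have h2 := hprod1 S ⟨0, hk0'⟩
      rw [abs_sub_le_iff]
      constructor <;> [skip; skip] <;>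
        · simp only [Set.mem_Icc] at hA; linarith [hA.1, hA.2]
  -- main case : η ≤ 1
  · have hε12 : ε ≤ 1/2 := by
      rw [hεdef, div_le_iff₀ (by positivity)]
      nlinarith
    -- find the index of maximal |v|
    haveI : Nonempty (Fin k) := ⟨⟨0, by omega⟩⟩
    obtain ⟨js, hjs⟩ := Finite.exists_max (fun j => |v j|)
    set V : ℝ := ⨆ j, |v j| with hVdef
    have hVeq : V = |v js| := by
      rw [hVdef]
      exact le_antisymm (ciSup_le hjs)
        (le_ciSup (Set.Finite.bddAbove (Set.finite_range fun j => |v j|)) js)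
    have hVpos : 0 < V := by
      rw [hVeq]
      rcases Function.ne_iff.mp hv with ⟨j, hj⟩
      have := hjs j
      have : 0 < |v j| := abs_pos.mpr hj
      linarith [hjs j]
    -- sign-corrected vector u with u js = V > 0
    set u : Fin k → ℝ := if 0 < v js then v else (fun j => - v j) with hudef
    have hujs : u js = V := by
      rw [hVeq, hudef]
      rcases lt_trichotomy (v js) 0 with h | h | h
      · simp [not_lt.mpr h.le, abs_of_neg h]
      · exfalso; rw [hVeq] at hVpos; simp [h] at hVpos
      · simp [h, abs_of_pos h]
    have huabs : ∀ j, |u j| = |v j| := by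
      intro j; rw [hudef]; split <;> simp
    have hillu : ∀ S : Finset (Fin n), |∑ j, (∏ i ∈ S, m i j) * u j| ≤ ε * V := by
      intro S
      have hthis := hill S
      have hneg : |∑ j, (∏ i ∈ S, m i j) * (- v j)| = |∑ j, (∏ i ∈ S, m i j) * v j| := by
        rw [← abs_neg, ← Finset.sum_neg_distrib]
        congr 1; apply Finset.sum_congr rfl; intros; ring
      rw [hudef]
      split
      · exact hthis
      · rw [hneg]; exact hthis
    -- the minimizing index j0
    have hPne : (Finset.univ.filter (fun j => 0 < u j)).Nonempty :=
      ⟨js, by simp [hujs, hVpos]⟩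
    obtain ⟨j0, hj0mem, hj0min⟩ := Finset.exists_min_image _ (fun j => π j / u j) hPne
    have hj0pos : 0 < u j0 := (Finset.mem_filter.mp hj0mem).2
    set t : ℝ := π j0 / u j0 with htdef
    have ht0 : 0 ≤ t := div_nonneg (hπ0 j0) hj0pos.le
    have htV : t * V ≤ 1 := by
      have hups : 0 < u js := by rw [hujs]; exact hVpos
      have hjs' : t ≤ π js / u js := hj0min js (by simp [hups])
      have h2 : t * u js ≤ π js := (le_div_iff₀ hups).mp hjs'
      rw [← hujs]; linarith [hπle1 js]
    set w : Fin k → ℝ := fun j => π j - t * u j with hwdef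
    have hw0 : ∀ j, 0 ≤ w j := by
      intro j
      rcases le_or_gt (u j) 0 with h | h
      · have : t * u j ≤ 0 := mul_nonpos_of_nonneg_of_nonpos ht0 h
        simp only [hwdef]; linarith [hπ0 j]
      · have h2 : t * u j ≤ π j := (le_div_iff₀ h).mp (hj0min j (by simp [h]))
        simp only [hwdef]
        linarith
    have hwj0 : w j0 = 0 := by
      simp only [hwdef, htdef]
      field_simp; ring
    -- sum decomposition for any S
    have hdec : ∀ S : Finset (Fin n), ∑ j, (∏ i ∈ S, m i j) * w j
        = ∑ j, (∏ i ∈ S, m i j) * π j - t * ∑ j, (∏ i ∈ S, m i j) * u j := by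
      intro S
      rw [Finset.mul_sum, ← Finset.sum_sub_distrib]
      apply Finset.sum_congr rfl
      intros; simp only [hwdef]; ring
    have hclose : ∀ S : Finset (Fin n),
        |∑ j, (∏ i ∈ S, m i j) * w j - ∑ j, (∏ i ∈ S, m i j) * π j| ≤ ε := by
      intro S
      rw [hdec S]
      have h1 := hillu S
      rw [show ∑ j, (∏ i ∈ S, m i j) * π j - t * ∑ j, (∏ i ∈ S, m i j) * u j
            - ∑ j, (∏ i ∈ S, m i j) * π j = -(t * ∑ j, (∏ i ∈ S, m i j) * u j) from by ring]
      rw [abs_neg, abs_mul, abs_of_nonneg ht0]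
      calc t * |∑ j, (∏ i ∈ S, m i j) * u j| ≤ t * (ε * V) :=
            mul_le_mul_of_nonneg_left h1 ht0
        _ = ε * (t * V) := by ring
        _ ≤ ε * 1 := mul_le_mul_of_nonneg_left htV hε0
        _ = ε := mul_one ε
    set s : ℝ := ∑ j, w j with hsdef
    have hsclose : |s - 1| ≤ ε := by
      have := hclose ∅
      simpa [hsdef, hπ1] using this
    have hs1 : 1 - ε ≤ s := by
      rcases abs_sub_le_iff.mp hsclose with ⟨h1, h2⟩; linarith
    have hspos : 0 < s := by linarith
    have hsle : s ≤ 1 + ε := by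
      rcases abs_sub_le_iff.mp hsclose with ⟨h1, h2⟩; linarith
    refine ⟨fun j => w j / s, fun j => div_nonneg (hw0 j) hspos.le, ?_, ?_, ?_⟩
    · rw [← Finset.sum_div, ← hsdef, div_self hspos.ne']
    · have hsub : (Finset.univ.filter (fun j => w j / s ≠ 0)) ⊆ Finset.univ.erase j0 := by
        intro j hj
        simp only [Finset.mem_filter] at hj
        rw [Finset.mem_erase]
        refine ⟨?_, Finset.mem_univ j⟩
        rintro rfl
        exact hj.2 (by rw [hwj0]; simp)
      calc _ ≤ (Finset.univ.erase j0).card := Finset.card_le_card hsub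
        _ = k - 1 := by rw [Finset.card_erase_of_mem (Finset.mem_univ j0)]; simp
    · intro S _
      set B : ℝ := ∑ j, (∏ i ∈ S, m i j) * w j with hBdef
      have hBdiv : ∑ j, (∏ i ∈ S, m i j) * (w j / s) = B / s := by
        rw [hBdef, Finset.sum_div]
        apply Finset.sum_congr rfl; intros; ring
      rw [hBdiv]
      have hB0 : 0 ≤ B :=
        Finset.sum_nonneg fun j _ => mul_nonneg (hprod0 S j) (hw0 j)
      have hBs : B ≤ s := by
        rw [hBdef, hsdef]
        refine Finset.sum_le_sum fun j _ => ?_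
        nlinarith [hprod0 S j, hprod1 S j, hw0 j]
      have h1 : |∑ j, (∏ i ∈ S, m i j) * π j - B| ≤ ε := by
        have := hclose S
        rw [abs_sub_comm] at this
        exact this
      have h2 : |B - B / s| ≤ ε := by
        have hs0 : s ≠ 0 := hspos.ne'
        have : B - B / s = (B / s) * (s - 1) := by field_simp
        rw [this, abs_mul]
        have hBsle : B / s ≤ 1 := (div_le_one hspos).mpr hBs
        have hBs0 : 0 ≤ B / s := div_nonneg hB0 hspos.le
        calc |B / s| * |s - 1| ≤ 1 * ε := by
              apply mul_le_mul _ hsclose (abs_nonneg _) zero_le_one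
              rw [abs_of_nonneg hBs0]; exact hBsle
        _ = ε := one_mul ε
      have h2ε : 2 * ε ≤ η := by
        have hb : (0:ℝ) < 3 * (k:ℝ)^2 := by positivity
        rw [hεdef, ← mul_div_assoc, div_le_iff₀ hb]
        exact stmt_19_aux η (k:ℝ) (Real.sqrt 2) hη.le hkR hs2 hs2nn
      calc |∑ j, (∏ i ∈ S, m i j) * π j - B / s|
          ≤ |∑ j, (∏ i ∈ S, m i j) * π j - B| + |B - B / s| := abs_sub_le _ _ _
        _ ≤ ε + ε := add_le_add h1 h2
        _ ≤ η := by linarith
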